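/- Let Q be a bipartite recurrent quiver on a finite vertex set V. Suppose T(t,v), defined for v ∈ V and t ∈ ℤ with t + ε(v) even, is a family of Laurent polynomials in the variables {x_v : v ∈ V} satisfying T(t+1,v)·T(t−1,v) = Π_u T(t,u)^{A(v,u)} + Π_w T(t,w)^{B(v,w)} (in the Laurent polynomial ring) whenever t + ε(v) is odd, with T(ε(v), v) = x_v. Let λ : V → ℝ and let f^λ be the tropical T-system with initial value λ. Then for all v ∈ V and t ∈ ℤ with t + ε(v) even, f^λ(t,v) = max{ Σ_u λ(u)·α(u) : α in the support of T(t,v) }, i.e. f^λ(t,v) is the maximum of the linear functional α ↦ Σ_u λ(u)·α(u) over the Newton polytope of T(t,v). -/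

import Mathlib

open scoped BigOperators

/-- A bipartite quiver on a finite vertex set `V`, encoded by a bipartition `eps`
and the two symmetric edge-multiplicity matrices `A` (arrows from `eps = 0` to `eps = 1`)
and `B` (arrows from `eps = 1` to `eps = 0`). -/
def BipartiteData {V : Type} [Fintype V] (eps : V → ℤ) (A B : V → V → ℕ) : Prop :=
  (∀ v, eps v = 0 ∨ eps v = 1) ∧
  (∀ u v, A u v = A v u) ∧
  (∀ u v, B u v = B v u) ∧
  (∀ v, A v v = 0) ∧
  (∀ v, B v v = 0) ∧
  (∀ u v, eps u = eps v → A u v = 0 ∧ B u v = 0) ∧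
  (∀ u v, A u v * B u v = 0)

/-- A bipartite quiver is recurrent iff the matrices `A` and `B` commute. -/
def RecurrentQuiver {V : Type} [Fintype V] (A B : V → V → ℕ) : Prop :=
  ∀ u v, (∑ w, A u w * B w v) = ∑ w, B u w * A w v

/-- The tropical `T`-system associated with a bipartite quiver, with initial value `lam`. -/
def IsTropicalTSystem {V : Type} [Fintype V] (eps : V → ℤ) (A B : V → V → ℕ)
    (lam : V → ℝ) (f : ℤ → V → ℝ) : Prop :=
  (∀ v, f (eps v) v = lam v) ∧
  (∀ (t : ℤ) (v : V), Odd (t + eps v) →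
    f (t + 1) v + f (t - 1) v =
      max (∑ u, (A v u : ℝ) * f t u) (∑ u, (B v u : ℝ) * f t u))

/-- The `T`-system associated with a bipartite quiver, as a family of Laurent polynomials
in `ℤ[ℤ^V]`, with initial conditions `T (eps v) v = x_v`. -/
def IsLaurentTSystem {V : Type} [Fintype V] [DecidableEq V]
    (eps : V → ℤ) (A B : V → V → ℕ)
    (T : ℤ → V → AddMonoidAlgebra ℤ (V → ℤ)) : Prop :=
  (∀ v, T (eps v) v = AddMonoidAlgebra.single (Pi.single v (1 : ℤ)) 1) ∧
  (∀ (t : ℤ) (v : V), Odd (t + eps v) →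
    T (t + 1) v * T (t - 1) v = (∏ u, T t u ^ A v u) + (∏ u, T t u ^ B v u))


set_option linter.unusedSectionVars false


namespace TropAux

open Finset
open scoped Pointwise

variable {V : Type} [Fintype V] [DecidableEq V]

noncomputable def wt (lam : V → ℝ) (a : V → ℤ) : ℝ := ∑ u, lam u * (a u : ℝ)

lemma wt_add (lam : V → ℝ) (a b : V → ℤ) : wt lam (a + b) = wt lam a + wt lam b := by
  simp only [wt, Pi.add_apply, Int.cast_add, mul_add]
  rw [Finset.sum_add_distrib]

lemma wt_zero (lam : V → ℝ) : wt lam (0 : V → ℤ) = 0 := by simp [wt]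

lemma wt_single (lam : V → ℝ) (v : V) : wt lam (Pi.single v (1 : ℤ)) = lam v := by
  rw [wt, Finset.sum_eq_single v]
  · simp
  · intro u _ hu
    rw [Pi.single_eq_of_ne hu]
    simp
  · simp

open scoped Classical in
noncomputable def Ph (lam : V → ℝ) (r : ℝ) (p : AddMonoidAlgebra ℤ (V → ℤ)) : ℤ :=
  ∑ a ∈ p.coeff.support, if wt lam a = r then p.coeff a else 0

def Bd (lam : V → ℝ) (r : ℝ) (p : AddMonoidAlgebra ℤ (V → ℤ)) : Prop :=
  ∀ a ∈ p.coeff.support, wt lam a ≤ r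

def Iv (lam : V → ℝ) (r : ℝ) (p : AddMonoidAlgebra ℤ (V → ℤ)) : Prop :=
  Bd lam r p ∧ 0 < Ph lam r p

variable (lam : V → ℝ)

open scoped Classical in
lemma Ph_subset {p : AddMonoidAlgebra ℤ (V → ℤ)} {U : Finset (V → ℤ)}
    (h : p.coeff.support ⊆ U) (r : ℝ) :
    Ph lam r p = ∑ a ∈ U, if wt lam a = r then p.coeff a else 0 :=
  Finset.sum_subset h fun a _ ha => by
    simp [Finsupp.notMem_support_iff.mp ha]

lemma Ph_exists {p : AddMonoidAlgebra ℤ (V → ℤ)} {r : ℝ} (h : Ph lam r p ≠ 0) :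
    ∃ a ∈ p.coeff.support, wt lam a = r := by
  classical
  by_contra hc
  push_neg at hc
  exact h (Finset.sum_eq_zero fun a ha => if_neg (hc a ha))

lemma Ph_zero (r : ℝ) : Ph lam r (0 : AddMonoidAlgebra ℤ (V → ℤ)) = 0 := by
  simp [Ph]

lemma Ph_mul {p q : AddMonoidAlgebra ℤ (V → ℤ)} {r s : ℝ}
    (hp : Bd lam r p) (hq : Bd lam s q) :
    Ph lam (r + s) (p * q) = Ph lam r p * Ph lam s q := by
  classical
  rw [Ph_subset lam (AddMonoidAlgebra.support_coeff_mul_subset p q)]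
  have key : ∀ c ∈ p.coeff.support + q.coeff.support,
      (if wt lam c = r + s then (p * q).coeff c else 0) =
      ∑ a ∈ p.coeff.support, ∑ b ∈ q.coeff.support,
        if wt lam c = r + s ∧ a + b = c then p.coeff a * q.coeff b else 0 := by
    intro c _
    split_ifs with h
    · rw [AddMonoidAlgebra.coeff_mul, Finsupp.sum]
      refine Finset.sum_congr rfl fun a _ => ?_
      rw [Finsupp.sum]
      refine Finset.sum_congr rfl fun b _ => ?_
      simp [h]
    · refine (Finset.sum_eq_zero fun a _ => Finset.sum_eq_zero fun b _ => ?_).symm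
      simp [h]
  rw [Finset.sum_congr rfl key, Finset.sum_comm]
  have inner : ∀ a ∈ p.coeff.support, ∀ b ∈ q.coeff.support,
      (∑ c ∈ p.coeff.support + q.coeff.support,
        if wt lam c = r + s ∧ a + b = c then p.coeff a * q.coeff b else 0) =
      (if wt lam a = r then p.coeff a else 0) * (if wt lam b = s then q.coeff b else 0) := by
    intro a ha b hb
    rw [Finset.sum_eq_single_of_mem (a + b) (Finset.add_mem_add ha hb)]
    · have hcond : (wt lam (a + b) = r + s) ↔ (wt lam a = r ∧ wt lam b = s) := by
        rw [wt_add]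
        constructor
        · intro h
          have h1 := hp a ha
          have h2 := hq b hb
          constructor <;> linarith
        · rintro ⟨h1, h2⟩; rw [h1, h2]
      simp only [and_true, hcond]
      split_ifs with h1 h2 h3 h4 <;> simp_all
    · intro c _ hc
      rw [if_neg]
      rintro ⟨-, h⟩
      exact hc h.symm
  calc ∑ a ∈ p.coeff.support, ∑ c ∈ p.coeff.support + q.coeff.support, ∑ b ∈ q.coeff.support,
        (if wt lam c = r + s ∧ a + b = c then p.coeff a * q.coeff b else 0)
      = ∑ a ∈ p.coeff.support, ∑ b ∈ q.coeff.support,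
          (if wt lam a = r then p.coeff a else 0) * (if wt lam b = s then q.coeff b else 0) := by
        refine Finset.sum_congr rfl fun a ha => ?_
        rw [Finset.sum_comm]
        exact Finset.sum_congr rfl fun b hb => inner a ha b hb
    _ = Ph lam r p * Ph lam s q := by
        rw [Ph, Ph, Finset.sum_mul_sum]

lemma Bd_mul {p q : AddMonoidAlgebra ℤ (V → ℤ)} {r s : ℝ}
    (hp : Bd lam r p) (hq : Bd lam s q) : Bd lam (r + s) (p * q) := by
  intro c hc
  obtain ⟨a, ha, b, hb, hab⟩ := Finset.mem_add.mp (AddMonoidAlgebra.support_coeff_mul_subset p q hc)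
  rw [← hab, wt_add]
  exact add_le_add (hp a ha) (hq b hb)

lemma Iv_mul {p q : AddMonoidAlgebra ℤ (V → ℤ)} {r s : ℝ}
    (hp : Iv lam r p) (hq : Iv lam s q) : Iv lam (r + s) (p * q) :=
  ⟨Bd_mul lam hp.1 hq.1, by rw [Ph_mul lam hp.1 hq.1]; exact mul_pos hp.2 hq.2⟩

lemma Iv_one : Iv lam 0 (1 : AddMonoidAlgebra ℤ (V → ℤ)) := by
  classical
  have h1 : (1 : AddMonoidAlgebra ℤ (V → ℤ)) = AddMonoidAlgebra.single 0 1 := rfl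
  constructor
  · intro a ha
    rw [h1, AddMonoidAlgebra.coeff_single, Finsupp.support_single_ne_zero _ one_ne_zero] at ha
    simp only [Finset.mem_singleton] at ha
    rw [ha, wt_zero]
  · rw [Ph, h1, AddMonoidAlgebra.coeff_single, Finsupp.support_single_ne_zero _ one_ne_zero]
    simp [wt_zero]

lemma Iv_single (v : V) :
    Iv lam (lam v) (AddMonoidAlgebra.single (Pi.single v (1 : ℤ)) (1 : ℤ)) := by
  classical
  constructor
  · intro a ha
    rw [AddMonoidAlgebra.coeff_single, Finsupp.support_single_ne_zero _ one_ne_zero] at ha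
    simp only [Finset.mem_singleton] at ha
    rw [ha, wt_single]
  · rw [Ph, AddMonoidAlgebra.coeff_single, Finsupp.support_single_ne_zero _ one_ne_zero]
    simp [wt_single]

lemma Iv_pow {p : AddMonoidAlgebra ℤ (V → ℤ)} {r : ℝ} (h : Iv lam r p) (n : ℕ) :
    Iv lam ((n : ℝ) * r) (p ^ n) := by
  induction n with
  | zero => simpa using Iv_one lam
  | succ n ih =>
      have : ((n + 1 : ℕ) : ℝ) * r = (n : ℝ) * r + r := by push_cast; ring
      rw [this, pow_succ]
      exact Iv_mul lam ih h

lemma Iv_prod {ι : Type} (s : Finset ι) (r : ι → ℝ) (g : ι → AddMonoidAlgebra ℤ (V → ℤ))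
    (h : ∀ i ∈ s, Iv lam (r i) (g i)) :
    Iv lam (∑ i ∈ s, r i) (∏ i ∈ s, g i) := by
  classical
  induction s using Finset.induction with
  | empty => simpa using Iv_one lam
  | insert _ _ hx ih =>
      rw [Finset.sum_insert hx, Finset.prod_insert hx]
      exact Iv_mul lam (h _ (Finset.mem_insert_self _ _))
        (ih fun i hi => h i (Finset.mem_insert_of_mem hi))

lemma Ph_add (r : ℝ) (p q : AddMonoidAlgebra ℤ (V → ℤ)) :
    Ph lam r (p + q) = Ph lam r p + Ph lam r q := by
  classical
  rw [Ph_subset lam (p := p + q) (Finsupp.support_add (g₁ := p.coeff) (g₂ := q.coeff)) r,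
    Ph_subset lam (Finset.subset_union_left (s₁ := p.coeff.support) (s₂ := q.coeff.support)) r,
    Ph_subset lam (Finset.subset_union_right (s₁ := p.coeff.support) (s₂ := q.coeff.support)) r,
    ← Finset.sum_add_distrib]
  refine Finset.sum_congr rfl fun a _ => ?_
  split_ifs <;> simp [AddMonoidAlgebra.coeff_add, Finsupp.add_apply]

lemma Ph_eq_zero_of_lt {p : AddMonoidAlgebra ℤ (V → ℤ)} {r s : ℝ}
    (hp : Bd lam r p) (h : r < s) : Ph lam s p = 0 := by
  classical
  refine Finset.sum_eq_zero fun a ha => if_neg fun he => ?_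
  exact absurd he (ne_of_lt (lt_of_le_of_lt (hp a ha) h))

lemma Iv_add {p q : AddMonoidAlgebra ℤ (V → ℤ)} {r s : ℝ}
    (hp : Iv lam r p) (hq : Iv lam s q) : Iv lam (max r s) (p + q) := by
  constructor
  · intro a ha
    rcases Finset.mem_union.mp (Finsupp.support_add (g₁ := p.coeff) (g₂ := q.coeff) ha) with h | h
    · exact le_trans (hp.1 a h) (le_max_left _ _)
    · exact le_trans (hq.1 a h) (le_max_right _ _)
  · rw [Ph_add]
    rcases lt_trichotomy r s with h | h | h
    · rw [max_eq_right h.le, Ph_eq_zero_of_lt lam hp.1 h]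
      simpa using hq.2
    · subst h
      rw [max_self]
      exact add_pos hp.2 hq.2
    · rw [max_eq_left h.le, Ph_eq_zero_of_lt lam hq.1 h]
      simpa using hp.2

lemma Iv_div {p q : AddMonoidAlgebra ℤ (V → ℤ)} {m s : ℝ}
    (hpq : Iv lam m (p * q)) (hq : Iv lam s q) : Iv lam (m - s) p := by
  classical
  have hpq0 : p * q ≠ 0 := by
    intro h
    have h2 := hpq.2
    rw [h, Ph_zero] at h2
    exact lt_irrefl 0 h2
  have hp0 : p ≠ 0 := fun h => hpq0 (by rw [h, zero_mul])
  have hsupp : p.coeff.support.Nonempty := Finsupp.support_nonempty_iff.mpr (mt AddMonoidAlgebra.coeff_eq_zero.mp hp0)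
  have hW : (p.coeff.support.image (wt lam)).Nonempty := hsupp.image _
  set d := (p.coeff.support.image (wt lam)).max' hW with hd
  have hBdd : Bd lam d p := fun a ha =>
    Finset.le_max' _ _ (Finset.mem_image_of_mem _ ha)
  have hSp : (p.coeff.support.filter (fun a => wt lam a = d)).Nonempty := by
    obtain ⟨a, ha, hwa⟩ := Finset.mem_image.mp (Finset.max'_mem _ hW)
    exact ⟨a, Finset.mem_filter.mpr ⟨ha, hwa⟩⟩
  have hSq : (q.coeff.support.filter (fun a => wt lam a = s)).Nonempty := by
    obtain ⟨b, hb, hwb⟩ := Ph_exists lam hq.2.ne'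
    exact ⟨b, Finset.mem_filter.mpr ⟨hb, hwb⟩⟩
  obtain ⟨a0, ha0, b0, hb0, huniq⟩ := UniqueSums.uniqueAdd_of_nonempty hSp hSq
  obtain ⟨ha0s, ha0w⟩ := Finset.mem_filter.mp ha0
  obtain ⟨hb0s, hb0w⟩ := Finset.mem_filter.mp hb0
  have huniq' : UniqueAdd p.coeff.support q.coeff.support a0 b0 := by
    intro a b ha hb hab
    have hwa : wt lam a ≤ d := hBdd a ha
    have hwb : wt lam b ≤ s := hq.1 b hb
    have hsum : wt lam a + wt lam b = d + s := by
      rw [← wt_add, hab, wt_add, ha0w, hb0w]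
    have hwa' : wt lam a = d := by linarith
    have hwb' : wt lam b = s := by linarith
    exact huniq (Finset.mem_filter.mpr ⟨ha, hwa'⟩) (Finset.mem_filter.mpr ⟨hb, hwb'⟩) hab
  have hcoef : (p * q).coeff (a0 + b0) = p.coeff a0 * q.coeff b0 :=
    AddMonoidAlgebra.coeff_mul_add_of_uniqueAdd huniq'
  have hmem : a0 + b0 ∈ (p * q).coeff.support := by
    rw [Finsupp.mem_support_iff, hcoef]
    exact mul_ne_zero (Finsupp.mem_support_iff.mp ha0s) (Finsupp.mem_support_iff.mp hb0s)
  have hds : d + s ≤ m := by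
    have := hpq.1 _ hmem
    rw [wt_add, ha0w, hb0w] at this
    exact this
  have hBd' : Bd lam (m - s) p := fun a ha => le_trans (hBdd a ha) (by linarith)
  have hmul := Ph_mul lam hBd' hq.1
  rw [sub_add_cancel] at hmul
  refine ⟨hBd', ?_⟩
  by_contra hle
  push_neg at hle
  have : Ph lam m (p * q) ≤ 0 := by
    rw [hmul]
    exact mul_nonpos_of_nonpos_of_nonneg hle hq.2.le
  exact absurd hpq.2 (not_lt.mpr this)

end TropAux


/-- the tropical `T`-system with initial value `lam` computes the maximum of the
linear functional `α ↦ Σ_u lam u * α u` over the Newton polytope (equivalently, the support)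
of the corresponding entry of the birational `T`-system. -/
theorem tropical_is_support_max
    {V : Type} [Fintype V] [DecidableEq V]
    (eps : V → ℤ) (A B : V → V → ℕ)
    (hbip : BipartiteData eps A B) (hrec : RecurrentQuiver A B)
    (T : ℤ → V → AddMonoidAlgebra ℤ (V → ℤ)) (hT : IsLaurentTSystem eps A B T)
    (lam : V → ℝ) (f : ℤ → V → ℝ) (hf : IsTropicalTSystem eps A B lam f) :
    ∀ (v : V) (t : ℤ), Even (t + eps v) →
      IsGreatest {r : ℝ | ∃ a ∈ (T t v).coeff.support, r = ∑ u, lam u * (a u : ℝ)} (f t v) := by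
  classical
  obtain ⟨heps, hAsym, hBsym, hAd, hBd2, hsame, hAB⟩ := hbip
  obtain ⟨hT0, hTrec⟩ := hT
  obtain ⟨hf0, hfrec⟩ := hf
  have main : ∀ n : ℕ, ∀ (v : V) (t : ℤ), Even (t + eps v) →
      (2 * t - 1).natAbs ≤ 2 * n + 1 → TropAux.Iv lam (f t v) (T t v) := by
    intro n
    induction n with
    | zero =>
        intro v t hev hle
        have ht : t = eps v := by
          rw [Int.even_iff] at hev
          rcases heps v with h | h <;> omega
        rw [ht, hT0 v, hf0 v]
        exact TropAux.Iv_single lam v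
    | succ n ih =>
        intro v t hev hle
        by_cases hsmall : (2 * t - 1).natAbs ≤ 2 * n + 1
        · exact ih v t hev hsmall
        · have hcase : t = (n : ℤ) + 2 ∨ t = -(n : ℤ) - 1 := by
            rw [Int.even_iff] at hev
            rcases heps v with h | h <;> omega
          rcases hcase with htt | htt
          · -- forward step
            have hodd : Odd (t - 1 + eps v) := by
              rw [Int.odd_iff]; rw [Int.even_iff] at hev; omega
            have hTe := hTrec (t - 1) v hodd
            have hfe := hfrec (t - 1) v hodd
            have e1 : t - 1 + 1 = t := by omega
            have e2 : t - 1 - 1 = t - 2 := by omega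
            rw [e1, e2] at hTe hfe
            have hlayer : ∀ u : V,
                TropAux.Iv lam ((A v u : ℝ) * f (t - 1) u) (T (t - 1) u ^ A v u) ∧
                TropAux.Iv lam ((B v u : ℝ) * f (t - 1) u) (T (t - 1) u ^ B v u) := by
              intro u
              by_cases hpar : eps u = eps v
              · have hA0 : A v u = 0 := (hsame v u hpar.symm).1
                have hB0 : B v u = 0 := (hsame v u hpar.symm).2
                constructor
                · simpa [hA0] using TropAux.Iv_one lam
                · simpa [hB0] using TropAux.Iv_one lam
              · have hevu : Even (t - 1 + eps u) := by
                  rcases heps u with h | h <;> rcases heps v with h' | h' <;>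
                    rw [Int.even_iff] at hev ⊢ <;> omega
                have hIH := ih u (t - 1) hevu (by omega)
                exact ⟨TropAux.Iv_pow lam hIH (A v u), TropAux.Iv_pow lam hIH (B v u)⟩
            set rA := ∑ u, (A v u : ℝ) * f (t - 1) u with hrA
            set rB := ∑ u, (B v u : ℝ) * f (t - 1) u with hrB
            have hMA : TropAux.Iv lam rA (∏ u, T (t - 1) u ^ A v u) :=
              TropAux.Iv_prod lam Finset.univ _ _ (fun u _ => (hlayer u).1)
            have hMB : TropAux.Iv lam rB (∏ u, T (t - 1) u ^ B v u) :=
              TropAux.Iv_prod lam Finset.univ _ _ (fun u _ => (hlayer u).2)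
            have hsum := TropAux.Iv_add lam hMA hMB
            rw [← hTe] at hsum
            have hev2 : Even (t - 2 + eps v) := by
              rw [Int.even_iff] at hev ⊢; omega
            have hend := ih v (t - 2) hev2 (by omega)
            have hdiv := TropAux.Iv_div lam hsum hend
            have hfv : f t v = max rA rB - f (t - 2) v := by linarith
            rw [hfv]
            exact hdiv
          · -- backward step
            have hodd : Odd (t + 1 + eps v) := by
              rw [Int.odd_iff]; rw [Int.even_iff] at hev; omega
            have hTe := hTrec (t + 1) v hodd
            have hfe := hfrec (t + 1) v hodd
            have e1 : t + 1 + 1 = t + 2 := by omega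
            have e2 : t + 1 - 1 = t := by omega
            rw [e1, e2] at hTe hfe
            have hlayer : ∀ u : V,
                TropAux.Iv lam ((A v u : ℝ) * f (t + 1) u) (T (t + 1) u ^ A v u) ∧
                TropAux.Iv lam ((B v u : ℝ) * f (t + 1) u) (T (t + 1) u ^ B v u) := by
              intro u
              by_cases hpar : eps u = eps v
              · have hA0 : A v u = 0 := (hsame v u hpar.symm).1
                have hB0 : B v u = 0 := (hsame v u hpar.symm).2
                constructor
                · simpa [hA0] using TropAux.Iv_one lam
                · simpa [hB0] using TropAux.Iv_one lam
              · have hevu : Even (t + 1 + eps u) := by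
                  rcases heps u with h | h <;> rcases heps v with h' | h' <;>
                    rw [Int.even_iff] at hev ⊢ <;> omega
                have hIH := ih u (t + 1) hevu (by omega)
                exact ⟨TropAux.Iv_pow lam hIH (A v u), TropAux.Iv_pow lam hIH (B v u)⟩
            set rA := ∑ u, (A v u : ℝ) * f (t + 1) u with hrA
            set rB := ∑ u, (B v u : ℝ) * f (t + 1) u with hrB
            have hMA : TropAux.Iv lam rA (∏ u, T (t + 1) u ^ A v u) :=
              TropAux.Iv_prod lam Finset.univ _ _ (fun u _ => (hlayer u).1)
            have hMB : TropAux.Iv lam rB (∏ u, T (t + 1) u ^ B v u) :=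
              TropAux.Iv_prod lam Finset.univ _ _ (fun u _ => (hlayer u).2)
            have hsum := TropAux.Iv_add lam hMA hMB
            rw [← hTe, mul_comm] at hsum
            have hev2 : Even (t + 2 + eps v) := by
              rw [Int.even_iff] at hev ⊢; omega
            have hend := ih v (t + 2) hev2 (by omega)
            have hdiv := TropAux.Iv_div lam hsum hend
            have hfv : f t v = max rA rB - f (t + 2) v := by linarith
            rw [hfv]
            exact hdiv
  intro v t hev
  have hiv := main t.natAbs v t hev (by omega)
  constructor
  · obtain ⟨a, ha, hwa⟩ := TropAux.Ph_exists lam hiv.2.ne'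
    exact ⟨a, ha, hwa.symm⟩
  · rintro r ⟨a, ha, rfl⟩
    exact hiv.1 a ha
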